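/- Under the double error-feedback compression scheme with compressor satisfying E‖𝒞[x] − x‖² ≤ ω‖x‖² (0 ≤ ω < 1) applied to buffers with E‖z_t^{(i)}‖² ≤ C for all i, t, the server-side error satisfies for every t ≥ 1: E‖δ̄_t‖² ≤ 8ω(1+ω)³C/(1−ω)⁴. -/

import Mathlib

open MeasureTheory ENNReal

section Helpers
variable {Ω : Type*} [MeasurableSpace Ω] {μ : Measure Ω}
variable {V : Type*} [NormedAddCommGroup V]

lemma elp2 (f : Ω → V) : eLpNorm f 2 μ
    = (∫⁻ w, ENNReal.ofReal (‖f w‖^2) ∂μ) ^ ((2:ℝ)⁻¹) := by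
  rw [eLpNorm_eq_lintegral_rpow_enorm_toReal (by norm_num) (by norm_num)]
  norm_num

lemma aInt_eq (f : Ω → V) (h : Integrable (fun w => ‖f w‖^2) μ) :
    ∫⁻ w, ENNReal.ofReal (‖f w‖^2) ∂μ = ENNReal.ofReal (∫ w, ‖f w‖^2 ∂μ) :=
  (ofReal_integral_eq_lintegral_ofReal h (Filter.Eventually.of_forall fun w => sq_nonneg _)).symm

lemma elp_congr_norm {f g : Ω → V} (h : ∀ w, ‖f w‖ = ‖g w‖) :
    eLpNorm f 2 μ = eLpNorm g 2 μ :=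
  le_antisymm (eLpNorm_mono fun w => (h w).le) (eLpNorm_mono fun w => (h w).ge)

lemma meas_norm {f : Ω → V} (hi : Integrable (fun w => ‖f w‖^2) μ) :
    AEStronglyMeasurable (fun w => ‖f w‖) μ := by
  have h2 : AEStronglyMeasurable (fun w => Real.sqrt (‖f w‖^2)) μ :=
    Real.continuous_sqrt.comp_aestronglyMeasurable hi.aestronglyMeasurable
  simpa [Real.sqrt_sq (norm_nonneg _)] using h2

lemma tri2 {f g : Ω → V} (hf : AEStronglyMeasurable (fun w => ‖f w‖) μ)
    (hg : AEStronglyMeasurable (fun w => ‖g w‖) μ) :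
    eLpNorm (fun w => f w + g w) 2 μ ≤ eLpNorm f 2 μ + eLpNorm g 2 μ := by
  calc eLpNorm (fun w => f w + g w) 2 μ
      ≤ eLpNorm (fun w => ‖f w‖ + ‖g w‖) 2 μ := by
        refine eLpNorm_mono fun w => ?_
        rw [Real.norm_of_nonneg (by positivity)]
        exact norm_add_le _ _
    _ ≤ eLpNorm (fun w => ‖f w‖) 2 μ + eLpNorm (fun w => ‖g w‖) 2 μ :=
        eLpNorm_add_le hf hg one_le_two
    _ = eLpNorm f 2 μ + eLpNorm g 2 μ := by rw [eLpNorm_norm, eLpNorm_norm]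

lemma tri3 {f g h : Ω → V} (hf : AEStronglyMeasurable (fun w => ‖f w‖) μ)
    (hg : AEStronglyMeasurable (fun w => ‖g w‖) μ)
    (hh : AEStronglyMeasurable (fun w => ‖h w‖) μ) :
    eLpNorm (fun w => f w + g w - h w) 2 μ ≤
      eLpNorm f 2 μ + eLpNorm g 2 μ + eLpNorm h 2 μ := by
  calc eLpNorm (fun w => f w + g w - h w) 2 μ
      ≤ eLpNorm (fun w => ‖f w‖ + ‖g w‖ + ‖h w‖) 2 μ := by
        refine eLpNorm_mono fun w => ?_
        rw [Real.norm_of_nonneg (by positivity)]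
        exact (norm_sub_le _ _).trans (by
          have := norm_add_le (f w) (g w); simp [norm_neg]; linarith)
    _ ≤ eLpNorm (fun w => ‖f w‖ + ‖g w‖) 2 μ + eLpNorm (fun w => ‖h w‖) 2 μ :=
        eLpNorm_add_le (hf.add hg) hh one_le_two
    _ ≤ eLpNorm (fun w => ‖f w‖) 2 μ + eLpNorm (fun w => ‖g w‖) 2 μ
          + eLpNorm (fun w => ‖h w‖) 2 μ :=
        add_le_add_left (eLpNorm_add_le hf hg one_le_two) _
    _ = _ := by rw [eLpNorm_norm, eLpNorm_norm, eLpNorm_norm]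

lemma elp_le_sqrt_of_int {f : Ω → V} {r : ℝ}
    (hi : Integrable (fun w => ‖f w‖^2) μ) (h : ∫ w, ‖f w‖^2 ∂μ ≤ r) :
    eLpNorm f 2 μ ≤ ENNReal.ofReal (Real.sqrt r) := by
  have hr : 0 ≤ r := le_trans (integral_nonneg fun w => sq_nonneg _) h
  rw [elp2, aInt_eq f hi]
  calc (ENNReal.ofReal (∫ w, ‖f w‖^2 ∂μ)) ^ ((2:ℝ)⁻¹)
      ≤ (ENNReal.ofReal r) ^ ((2:ℝ)⁻¹) :=
        ENNReal.rpow_le_rpow (ofReal_le_ofReal h) (by norm_num)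
    _ = ENNReal.ofReal (r ^ ((2:ℝ)⁻¹)) := ENNReal.ofReal_rpow_of_nonneg hr (by norm_num)
    _ = ENNReal.ofReal (Real.sqrt r) := by rw [Real.sqrt_eq_rpow]; norm_num

lemma comp_elp {E q : Ω → V} {ω : ℝ} (hω : 0 ≤ ω)
    (hEint : Integrable (fun w => ‖E w‖^2) μ)
    (hc : ∫ w, ‖E w‖^2 ∂μ ≤ ω * ∫ w, ‖q w‖^2 ∂μ) :
    eLpNorm E 2 μ ≤ ENNReal.ofReal (Real.sqrt ω) * eLpNorm q 2 μ := by
  by_cases hq : Integrable (fun w => ‖q w‖^2) μ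
  · rw [elp2, elp2]
    calc (∫⁻ w, ENNReal.ofReal (‖E w‖^2) ∂μ) ^ ((2:ℝ)⁻¹)
        ≤ (ENNReal.ofReal ω * ∫⁻ w, ENNReal.ofReal (‖q w‖^2) ∂μ) ^ ((2:ℝ)⁻¹) := by
          refine ENNReal.rpow_le_rpow ?_ (by norm_num)
          rw [aInt_eq E hEint, aInt_eq q hq, ← ENNReal.ofReal_mul hω]
          exact ofReal_le_ofReal hc
      _ = (ENNReal.ofReal ω) ^ ((2:ℝ)⁻¹) *
            (∫⁻ w, ENNReal.ofReal (‖q w‖^2) ∂μ) ^ ((2:ℝ)⁻¹) :=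
          ENNReal.mul_rpow_of_nonneg _ _ (by norm_num)
      _ = ENNReal.ofReal (Real.sqrt ω) *
            (∫⁻ w, ENNReal.ofReal (‖q w‖^2) ∂μ) ^ ((2:ℝ)⁻¹) := by
          rw [ENNReal.ofReal_rpow_of_nonneg hω (by norm_num), Real.sqrt_eq_rpow]
          norm_num
  · have h0 : ∫ w, ‖E w‖^2 ∂μ = 0 := by
      refine le_antisymm ?_ (integral_nonneg fun w => sq_nonneg _)
      rw [integral_undef hq] at hc; simpa using hc
    rw [elp2, aInt_eq E hEint, h0]
    simp [ENNReal.zero_rpow_of_pos]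

lemma integral_sq_le_of_elp {f : Ω → V} {B : ℝ} (hB : 0 ≤ B)
    (h : eLpNorm f 2 μ ≤ ENNReal.ofReal B) :
    ∫ w, ‖f w‖^2 ∂μ ≤ B^2 := by
  by_cases hi : Integrable (fun w => ‖f w‖^2) μ
  · rw [elp2, aInt_eq f hi] at h
    have h2 : ENNReal.ofReal (∫ w, ‖f w‖^2 ∂μ) ≤ ENNReal.ofReal (B^2) := by
      have h3 := ENNReal.rpow_le_rpow (z := 2) h (by norm_num)
      have e1 : B ^ (2:ℝ) = B ^ 2 := by
        rw [show (2:ℝ) = ((2:ℕ):ℝ) by norm_num, Real.rpow_natCast]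
      rwa [← ENNReal.rpow_mul, inv_mul_cancel₀ (two_ne_zero), ENNReal.rpow_one,
        ENNReal.ofReal_rpow_of_nonneg hB (by norm_num), e1] at h3
    exact (ENNReal.ofReal_le_ofReal_iff (by positivity)).mp h2
  · rw [integral_undef hi]; positivity

end Helpers

set_option maxHeartbeats 1000000 in
theorem server_error_feedback_residual_bound
    {Ωs : Type*} [MeasurableSpace Ωs] (μ : Measure Ωs) [IsProbabilityMeasure μ]
    (d n : ℕ) (hd : 1 ≤ d) (hn : 1 ≤ n)
    (ω C : ℝ) (hω0 : 0 ≤ ω) (hω1 : ω < 1) (hC : 0 < C)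
    (z δ zhat : ℕ → Fin n → Ωs → EuclideanSpace ℝ (Fin d))
    (δbar cbar : ℕ → Ωs → EuclideanSpace ℝ (Fin d))
    (hδ0 : ∀ i, δ 0 i = 0)
    (hδrec : ∀ t i, δ (t + 1) i = fun w => z t i w + δ t i w - zhat t i w)
    (hcomp : ∀ t i,
      ∫ w, ‖zhat t i w - (z t i w + δ t i w)‖ ^ 2 ∂μ ≤
        ω * ∫ w, ‖z t i w + δ t i w‖ ^ 2 ∂μ)
    (hδbar0 : δbar 0 = 0)
    (hδbarrec : ∀ t, δbar (t + 1) =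
      fun w => ((n : ℝ)⁻¹ • ∑ i, zhat t i w) + δbar t w - cbar t w)
    (hcompbar : ∀ t,
      ∫ w, ‖cbar t w - (((n : ℝ)⁻¹ • ∑ i, zhat t i w) + δbar t w)‖ ^ 2 ∂μ ≤
        ω * ∫ w, ‖((n : ℝ)⁻¹ • ∑ i, zhat t i w) + δbar t w‖ ^ 2 ∂μ)
    (hz : ∀ t i, ∫ w, ‖z t i w‖ ^ 2 ∂μ ≤ C)
    (hzint : ∀ t i, Integrable (fun w => ‖z t i w‖ ^ 2) μ)
    (hδint : ∀ t i, Integrable (fun w => ‖δ t i w‖ ^ 2) μ)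
    (hzhatint : ∀ t i, Integrable (fun w => ‖zhat t i w‖ ^ 2) μ)
    (hδbarint : ∀ t, Integrable (fun w => ‖δbar t w‖ ^ 2) μ) :
    ∀ t : ℕ, 1 ≤ t →
      ∫ w, ‖δbar t w‖ ^ 2 ∂μ ≤ 8 * ω * (1 + ω) ^ 3 * C / (1 - ω) ^ 4 := by
  set σ := Real.sqrt ω with hσdef
  set c := Real.sqrt C with hcdef
  have hσ0 : 0 ≤ σ := Real.sqrt_nonneg ω
  have hσω : σ ^ 2 = ω := Real.sq_sqrt hω0
  have hσ1 : σ < 1 := by nlinarith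
  have h1σ : 0 < 1 - σ := by linarith
  have hc0 : 0 ≤ c := Real.sqrt_nonneg C
  have hcC : c ^ 2 = C := Real.sq_sqrt hC.le
  set P : ℝ := σ * c / (1 - σ) with hPdef
  have hP0 : 0 ≤ P := by positivity
  set K : ℝ := c + 2 * P with hKdef
  have hK0 : 0 ≤ K := by positivity
  set Bst : ℝ := σ * K / (1 - σ) with hBdef
  have hBst0 : 0 ≤ Bst := by positivity
  -- measurability of norms
  have hzm : ∀ t i, AEStronglyMeasurable (fun w => ‖z t i w‖) μ :=
    fun t i => meas_norm (hzint t i)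
  have hδm : ∀ t i, AEStronglyMeasurable (fun w => ‖δ t i w‖) μ :=
    fun t i => meas_norm (hδint t i)
  have hzhm : ∀ t i, AEStronglyMeasurable (fun w => ‖zhat t i w‖) μ :=
    fun t i => meas_norm (hzhatint t i)
  have hδbm : ∀ t, AEStronglyMeasurable (fun w => ‖δbar t w‖) μ :=
    fun t => meas_norm (hδbarint t)
  -- z bound
  have hzel : ∀ t i, eLpNorm (z t i) 2 μ ≤ ENNReal.ofReal c :=
    fun t i => elp_le_sqrt_of_int (hzint t i) (hz t i)
  -- worker residual bound
  have hDel : ∀ t i, eLpNorm (δ t i) 2 μ ≤ ENNReal.ofReal P := by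
    intro t
    induction t with
    | zero => intro i; rw [hδ0 i]; simp
    | succ t ih =>
      intro i
      have e1 : eLpNorm (δ (t+1) i) 2 μ
          = eLpNorm (fun w => zhat t i w - (z t i w + δ t i w)) 2 μ := by
        rw [hδrec t i]
        exact elp_congr_norm fun w => (norm_sub_rev _ _)
      have hEi : Integrable
          (fun w => ‖zhat t i w - (z t i w + δ t i w)‖ ^ 2) μ := by
        have hfe : (fun w => ‖zhat t i w - (z t i w + δ t i w)‖ ^ 2)
            = (fun w => ‖δ (t+1) i w‖ ^ 2) := by
          funext w; rw [hδrec t i]; rw [norm_sub_rev]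
        rw [hfe]; exact hδint (t+1) i
      have e2 := comp_elp hω0 hEi (hcomp t i)
      have e3 : eLpNorm (fun w => z t i w + δ t i w) 2 μ
          ≤ ENNReal.ofReal c + ENNReal.ofReal P :=
        le_trans (tri2 (hzm t i) (hδm t i)) (add_le_add (hzel t i) (ih i))
      calc eLpNorm (δ (t+1) i) 2 μ
          = _ := e1
        _ ≤ ENNReal.ofReal σ * eLpNorm (fun w => z t i w + δ t i w) 2 μ := e2
        _ ≤ ENNReal.ofReal σ * (ENNReal.ofReal c + ENNReal.ofReal P) := by
            exact mul_le_mul_right e3 _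
        _ = ENNReal.ofReal (σ * (c + P)) := by
            rw [← ENNReal.ofReal_add hc0 hP0, ← ENNReal.ofReal_mul hσ0]
        _ ≤ ENNReal.ofReal P := by
            refine ofReal_le_ofReal ?_
            rw [hPdef]; rw [div_eq_iff (ne_of_gt h1σ)] at *
            nlinarith [hP0]
  -- zhat bound
  have hzh : ∀ t i, eLpNorm (zhat t i) 2 μ ≤ ENNReal.ofReal K := by
    intro t i
    have hrep : zhat t i = fun w => z t i w + δ t i w - δ (t+1) i w := by
      funext w; rw [hδrec t i]
      show zhat t i w = z t i w + δ t i w - (z t i w + δ t i w - zhat t i w)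
      exact (_root_.sub_sub_cancel _ _).symm
    calc eLpNorm (zhat t i) 2 μ
        = eLpNorm (fun w => z t i w + δ t i w - δ (t+1) i w) 2 μ := by rw [hrep]
      _ ≤ eLpNorm (z t i) 2 μ + eLpNorm (δ t i) 2 μ + eLpNorm (δ (t+1) i) 2 μ :=
          tri3 (hzm t i) (hδm t i) (hδm (t+1) i)
      _ ≤ ENNReal.ofReal c + ENNReal.ofReal P + ENNReal.ofReal P :=
          add_le_add (add_le_add (hzel t i) (hDel t i)) (hDel (t+1) i)
      _ = ENNReal.ofReal K := by
          rw [← ENNReal.ofReal_add hc0 hP0, ← ENNReal.ofReal_add (by positivity) hP0]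
          congr 1; rw [hKdef]; ring
  -- average bound
  have hu : ∀ t, eLpNorm (fun w => ((n : ℝ)⁻¹ • ∑ i, zhat t i w) + δbar t w) 2 μ
      ≤ ENNReal.ofReal K + eLpNorm (δbar t) 2 μ := by
    intro t
    have hsm : AEStronglyMeasurable (fun w => (n:ℝ)⁻¹ * ∑ i, ‖zhat t i w‖) μ := by
      exact (Finset.aestronglyMeasurable_fun_sum _ fun i _ => hzhm t i).const_mul _
    calc eLpNorm (fun w => ((n : ℝ)⁻¹ • ∑ i, zhat t i w) + δbar t w) 2 μ
        ≤ eLpNorm (fun w => ((n:ℝ)⁻¹ * ∑ i, ‖zhat t i w‖) + ‖δbar t w‖) 2 μ := by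
          refine eLpNorm_mono fun w => ?_
          have hnn : (0:ℝ) ≤ (n:ℝ)⁻¹ * ∑ i, ‖zhat t i w‖ := by positivity
          rw [Real.norm_of_nonneg (by positivity)]
          refine (norm_add_le _ _).trans (add_le_add_left ?_ _)
          rw [norm_smul]
          simp only [norm_inv, Real.norm_natCast]
          exact mul_le_mul_of_nonneg_left (norm_sum_le _ _) (by positivity)
      _ ≤ eLpNorm (fun w => (n:ℝ)⁻¹ * ∑ i, ‖zhat t i w‖) 2 μ
            + eLpNorm (fun w => ‖δbar t w‖) 2 μ :=
          eLpNorm_add_le hsm (hδbm t) one_le_two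
      _ ≤ ENNReal.ofReal K + eLpNorm (δbar t) 2 μ := by
          rw [eLpNorm_norm]
          refine add_le_add_left ?_ _
          have e1 : (fun w => (n:ℝ)⁻¹ * ∑ i, ‖zhat t i w‖)
              = ((n:ℝ)⁻¹ • fun w => ∑ i, ‖zhat t i w‖) := rfl
          rw [e1, eLpNorm_const_smul]
          have e2 : (fun w => ∑ i, ‖zhat t i w‖)
              = (∑ i, fun w => ‖zhat t i w‖) := by funext w; simp
          have e3 : eLpNorm (fun w => ∑ i, ‖zhat t i w‖) 2 μ
              ≤ ∑ i : Fin n, ENNReal.ofReal K := by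
            rw [e2]
            refine le_trans (eLpNorm_sum_le (fun i _ => hzhm t i) one_le_two) ?_
            refine Finset.sum_le_sum fun i _ => ?_
            rw [eLpNorm_norm]; exact hzh t i
          have hn0 : (n:ℝ) ≠ 0 := by positivity
          have e4 : ((‖((n:ℝ))⁻¹‖₊ : ℝ≥0∞)) * (n : ℝ≥0∞) = 1 := by
            rw [← enorm_eq_nnnorm, ← ofReal_norm, Real.norm_of_nonneg (by positivity),
              ← ENNReal.ofReal_natCast n, ← ENNReal.ofReal_mul (by positivity),
              inv_mul_cancel₀ hn0, ENNReal.ofReal_one]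
          calc (‖((n:ℝ))⁻¹‖₊ : ℝ≥0∞) • eLpNorm (fun w => ∑ i, ‖zhat t i w‖) 2 μ
              ≤ (‖((n:ℝ))⁻¹‖₊ : ℝ≥0∞) * ∑ i : Fin n, ENNReal.ofReal K := by
                rw [smul_eq_mul]; exact mul_le_mul_right e3 _
            _ = ENNReal.ofReal K := by
                simp only [Finset.sum_const, Finset.card_univ, Fintype.card_fin,
                  nsmul_eq_mul]
                rw [← mul_assoc, e4, one_mul]
  -- server residual bound
  have hBel : ∀ t, eLpNorm (δbar t) 2 μ ≤ ENNReal.ofReal Bst := by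
    intro t
    induction t with
    | zero => rw [hδbar0]; simp
    | succ t ih =>
      have e1 : eLpNorm (δbar (t+1)) 2 μ
          = eLpNorm (fun w =>
              cbar t w - (((n : ℝ)⁻¹ • ∑ i, zhat t i w) + δbar t w)) 2 μ := by
        rw [hδbarrec t]
        exact elp_congr_norm fun w => (norm_sub_rev _ _)
      have hEi : Integrable (fun w =>
          ‖cbar t w - (((n : ℝ)⁻¹ • ∑ i, zhat t i w) + δbar t w)‖ ^ 2) μ := by
        have hfe : (fun w =>
            ‖cbar t w - (((n : ℝ)⁻¹ • ∑ i, zhat t i w) + δbar t w)‖ ^ 2)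
            = (fun w => ‖δbar (t+1) w‖ ^ 2) := by
          funext w; rw [hδbarrec t]; rw [norm_sub_rev]
        rw [hfe]; exact hδbarint (t+1)
      have e2 := comp_elp hω0 hEi (hcompbar t)
      have e3 : eLpNorm (fun w => ((n : ℝ)⁻¹ • ∑ i, zhat t i w) + δbar t w) 2 μ
          ≤ ENNReal.ofReal K + ENNReal.ofReal Bst :=
        le_trans (hu t) (add_le_add_right ih _)
      calc eLpNorm (δbar (t+1)) 2 μ
          = _ := e1
        _ ≤ ENNReal.ofReal σ *
              eLpNorm (fun w => ((n : ℝ)⁻¹ • ∑ i, zhat t i w) + δbar t w) 2 μ := e2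
        _ ≤ ENNReal.ofReal σ * (ENNReal.ofReal K + ENNReal.ofReal Bst) :=
            mul_le_mul_right e3 _
        _ = ENNReal.ofReal (σ * (K + Bst)) := by
            rw [← ENNReal.ofReal_add hK0 hBst0, ← ENNReal.ofReal_mul hσ0]
        _ ≤ ENNReal.ofReal Bst := by
            refine ofReal_le_ofReal ?_
            rw [hBdef, div_eq_iff (ne_of_gt h1σ)] at *
            nlinarith [hBst0]
  -- conclusion
  intro t ht
  have hfin : ∫ w, ‖δbar t w‖ ^ 2 ∂μ ≤ Bst ^ 2 :=
    integral_sq_le_of_elp hBst0 (hBel t)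
  refine le_trans hfin ?_
  -- real arithmetic
  have hBst : Bst = σ * c * (1 + σ) / (1 - σ)^2 := by
    rw [hBdef, hKdef, hPdef]; field_simp; ring
  have h1ω : 1 - ω = (1 - σ) * (1 + σ) := by rw [← hσω]; ring
  have hkey : (1 + σ)^6 ≤ 8 * (1 + ω)^3 := by
    have h2 : (1 + σ)^2 ≤ 2 * (1 + ω) := by nlinarith [sq_nonneg (1 - σ)]
    calc (1 + σ)^6 = ((1 + σ)^2)^3 := by ring
      _ ≤ (2 * (1 + ω))^3 := by
          refine pow_le_pow_left₀ (by positivity) h2 3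
      _ = 8 * (1 + ω)^3 := by ring
  rw [hBst, div_pow, div_le_div_iff₀ (pow_pos (pow_pos h1σ 2) 2) (pow_pos (by linarith : (0:ℝ) < 1 - ω) 4)]
  have expand : (σ * c * (1 + σ))^2 = ω * C * (1 + σ)^2 := by
    rw [← hσω, ← hcC]; ring
  rw [expand, h1ω]
  calc ω * C * (1 + σ)^2 * ((1 - σ) * (1 + σ))^4
      = (ω * C * (1 - σ)^4) * (1 + σ)^6 := by ring
    _ ≤ (ω * C * (1 - σ)^4) * (8 * (1 + ω)^3) := by
        refine mul_le_mul_of_nonneg_left hkey (by positivity)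
    _ = 8 * ω * (1 + ω)^3 * C * ((1 - σ)^2)^2 := by ring
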